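/- arXiv:1809.05758 — 2 statements merged into one kernel-verified Lean document; each statement's English description precedes it below -/
import Mathlib

section
/- Let X₁,…,X_i be i.i.d. random points in ℝ^d with common density f that is essentially bounded, and let r > 0. Then the probability that the geometric graph on {X₁,…,X_i} with connectivity radius r (edges between points at distance < r) is connected is at most i^{i−2} · (r^d · ‖f‖_∞ · θ_d)^{i−1}, where θ_d is the volume of the unit ball in ℝ^d. -/
open scoped Classical
open Metric MeasureTheory ProbabilityTheory
open scoped ENNReal

/-- The geometric graph on points `x : Fin i → ℝ^d` with connectivity radius `r`:
an edge between distinct indices `a b` whenever `dist (x a) (x b) < r`. -/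
def geomGraph {d i : ℕ} (r : ℝ) (x : Fin i → EuclideanSpace ℝ (Fin d)) :
    SimpleGraph (Fin i) :=
  SimpleGraph.fromRel (fun a b => dist (x a) (x b) < r)

namespace GeomAux

variable {n : ℕ}

/-- If `p v = v` then `v` never reaches `0`. -/
lemma p_ne_self [NeZero n] {p : Fin n → Fin n} {v : Fin n} (hv : v ≠ 0)
    (h : ∃ k, p^[k] v = 0) : p v ≠ v := by
  intro hpv
  obtain ⟨k, hk⟩ := h
  rw [Function.iterate_fixed hpv k] at hk
  exact hv hk

/-- Leaf existence: in a finite "forest" given by a parent map, any nonempty set of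
nonzero vertices that all reach `0` contains a vertex that is nobody's parent. -/
lemma exists_leaf [NeZero n] (p : Fin n → Fin n) (t : Finset (Fin n)) (h0 : (0 : Fin n) ∉ t)
    (hac : ∀ v ∈ t, ∃ k, p^[k] v = 0) (hne : t.Nonempty) :
    ∃ ℓ ∈ t, ∀ w ∈ t, p w ≠ ℓ := by
  classical
  set dep : Fin n → ℕ := fun v => if h : ∃ k, p^[k] v = 0 then Nat.find h else 0 with hdep
  obtain ⟨ℓ, hℓt, hmax⟩ := t.exists_max_image dep hne
  refine ⟨ℓ, hℓt, fun w hw hpw => ?_⟩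
  have hw0 : w ≠ 0 := fun h => h0 (h ▸ hw)
  have hew : ∃ k, p^[k] w = 0 := hac w hw
  have hk : p^[Nat.find hew] w = 0 := Nat.find_spec hew
  have hkpos : 0 < Nat.find hew := by
    rcases Nat.eq_zero_or_pos (Nat.find hew) with h | h
    · rw [h] at hk; exact absurd hk hw0
    · exact h
  have hk' : p^[Nat.find hew - 1] (p w) = 0 := by
    have := hk
    rwa [← Nat.succ_pred_eq_of_pos hkpos, Function.iterate_succ_apply] at this
  have hepw : ∃ k, p^[k] (p w) = 0 := ⟨_, hk'⟩
  have hlt : dep (p w) < dep w := by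
    have h1 : dep w = Nat.find hew := by simp only [hdep]; rw [dif_pos hew]
    have h2 : dep (p w) = Nat.find hepw := by simp only [hdep]; rw [dif_pos hepw]
    have h3 : Nat.find hepw ≤ Nat.find hew - 1 := Nat.find_min' hepw hk'
    omega
  rw [hpw] at hlt
  exact absurd (hmax w hw) (not_le.mpr hlt)

section Code

variable [NeZero n]

/-- Current leaves: elements of `s.erase 0` that are not the parent of any element
of `s.erase 0`. -/
def leaves (p : Fin n → Fin n) (s : Finset (Fin n)) : Finset (Fin n) :=
  (s.erase 0).filter fun v => ∀ w ∈ s.erase 0, p w ≠ v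

lemma leaves_subset (p : Fin n → Fin n) (s : Finset (Fin n)) :
    leaves p s ⊆ s.erase 0 := Finset.filter_subset _ _

/-- Prüfer-style code: repeatedly remove the largest leaf and record its parent. -/
def codeAux (p : Fin n → Fin n) (s : Finset (Fin n)) : List (Fin n) :=
  if h : (leaves p s).Nonempty then
    p ((leaves p s).max' h) :: codeAux p (s.erase ((leaves p s).max' h))
  else []
termination_by s.card
decreasing_by
  exact Finset.card_erase_lt_of_mem
    (Finset.mem_of_mem_erase (leaves_subset _ _ (Finset.max'_mem _ h)))

/-- Invariant for the code recursion. -/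
def Inv (p : Fin n → Fin n) (s : Finset (Fin n)) : Prop :=
  0 ∈ s ∧ (∀ w ∈ s, w ≠ 0 → p w ∈ s) ∧ ∀ v ∈ s, ∃ k, p^[k] v = 0

lemma Inv.erase_leaf {p : Fin n → Fin n} {s : Finset (Fin n)} (h : Inv p s) {ℓ : Fin n}
    (hℓ : ℓ ∈ leaves p s) : Inv p (s.erase ℓ) := by
  have hℓe : ℓ ∈ s.erase 0 := leaves_subset _ _ hℓ
  have hℓ0 : ℓ ≠ 0 := Finset.ne_of_mem_erase hℓe
  have hfil : ∀ w ∈ s.erase 0, p w ≠ ℓ := (Finset.mem_filter.mp hℓ).2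
  refine ⟨Finset.mem_erase.mpr ⟨Ne.symm hℓ0, h.1⟩, ?_, ?_⟩
  · intro w hw hw0
    have hws : w ∈ s := Finset.mem_of_mem_erase hw
    refine Finset.mem_erase.mpr ⟨hfil w (Finset.mem_erase.mpr ⟨hw0, hws⟩), h.2.1 w hws hw0⟩
  · exact fun v hv => h.2.2 v (Finset.mem_of_mem_erase hv)

lemma leaves_nonempty {p : Fin n → Fin n} {s : Finset (Fin n)} (h : Inv p s)
    (hne : (s.erase 0).Nonempty) : (leaves p s).Nonempty := by
  obtain ⟨ℓ, hℓ, hl⟩ := exists_leaf p (s.erase 0) (Finset.notMem_erase _ _)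
    (fun v hv => h.2.2 v (Finset.mem_of_mem_erase hv)) hne
  exact ⟨ℓ, Finset.mem_filter.mpr ⟨hℓ, hl⟩⟩

lemma codeAux_coe (p : Fin n → Fin n) : ∀ s : Finset (Fin n), Inv p s →
    (codeAux p s : Multiset (Fin n)) = (s.erase 0).val.map p := by
  intro s
  induction s using Finset.strongInduction with
  | _ s ih =>
    intro h
    by_cases hne : (s.erase 0).Nonempty
    · have hl := leaves_nonempty h hne
      set ℓ := (leaves p s).max' hl with hℓdef
      have hℓ : ℓ ∈ leaves p s := Finset.max'_mem _ _
      have hℓe : ℓ ∈ s.erase 0 := leaves_subset _ _ hℓ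
      have hℓs : ℓ ∈ s := Finset.mem_of_mem_erase hℓe
      rw [codeAux, dif_pos hl]
      have ih' := ih (s.erase ℓ) (Finset.erase_ssubset hℓs) (h.erase_leaf hℓ)
      have hcons : ((p ℓ :: codeAux p (s.erase ℓ) : List (Fin n)) : Multiset (Fin n))
          = p ℓ ::ₘ (codeAux p (s.erase ℓ) : Multiset (Fin n)) := rfl
      rw [hcons, ih']
      have h2 : (s.erase 0).val = ℓ ::ₘ ((s.erase ℓ).erase 0).val := by
        rw [show (s.erase ℓ).erase 0 = (s.erase 0).erase ℓ from Finset.erase_right_comm]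
        exact (Multiset.cons_erase (Finset.mem_val.mpr hℓe)).symm
      rw [h2, Multiset.map_cons]
    · rw [codeAux, dif_neg (fun hl => hne (hl.mono (leaves_subset p s)))]
      rw [Finset.not_nonempty_iff_eq_empty.mp hne]
      simp

lemma codeAux_mem {p : Fin n → Fin n} {s : Finset (Fin n)} (h : Inv p s) (v : Fin n) :
    v ∈ codeAux p s ↔ ∃ w ∈ s.erase 0, p w = v := by
  rw [← Multiset.mem_coe, codeAux_coe p s h, Multiset.mem_map]
  constructor
  · rintro ⟨w, hw, rfl⟩
    exact ⟨w, Finset.mem_def.mpr hw, rfl⟩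
  · rintro ⟨w, hw, rfl⟩
    exact ⟨w, Finset.mem_def.mp hw, rfl⟩

lemma codeAux_length {p : Fin n → Fin n} {s : Finset (Fin n)} (h : Inv p s) :
    (codeAux p s).length = s.card - 1 := by
  have h1 : (codeAux p s).length = Multiset.card ((codeAux p s : Multiset (Fin n))) :=
    (Multiset.coe_card _).symm
  rw [h1, codeAux_coe p s h, Multiset.card_map]
  show (s.erase 0).card = s.card - 1
  exact Finset.card_erase_of_mem h.1

lemma codeAux_getLast? (p : Fin n → Fin n) : ∀ s : Finset (Fin n), Inv p s →
    (s.erase 0).Nonempty → (codeAux p s).getLast? = some 0 := by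
  intro s
  induction s using Finset.strongInduction with
  | _ s ih =>
    intro h hne
    have hl := leaves_nonempty h hne
    set ℓ := (leaves p s).max' hl with hℓdef
    have hℓ : ℓ ∈ leaves p s := Finset.max'_mem _ _
    have hℓe : ℓ ∈ s.erase 0 := leaves_subset _ _ hℓ
    have hℓs : ℓ ∈ s := Finset.mem_of_mem_erase hℓe
    have hℓ0 : ℓ ≠ 0 := Finset.ne_of_mem_erase hℓe
    have hinv' : Inv p (s.erase ℓ) := h.erase_leaf hℓ
    rw [codeAux, dif_pos hl]
    by_cases h2 : ((s.erase ℓ).erase 0).Nonempty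
    · have hrest := ih (s.erase ℓ) (Finset.erase_ssubset hℓs) hinv' h2
      have hlen : (codeAux p (s.erase ℓ)).length = (s.erase ℓ).card - 1 :=
        codeAux_length hinv'
      have hrne : codeAux p (s.erase ℓ) ≠ [] := by
        intro hnil
        rw [hnil] at hlen
        have := Finset.card_erase_of_mem hinv'.1
        have := Finset.card_pos.mpr h2
        simp at hlen
        omega
      obtain ⟨b, tl, hcl⟩ : ∃ b tl, codeAux p (s.erase ℓ) = b :: tl := by
        cases hcd : codeAux p (s.erase ℓ) with
        | nil => exact absurd hcd hrne
        | cons b tl => exact ⟨b, tl, rfl⟩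
      rw [hcl] at hrest
      rw [hcl, List.getLast?_cons_cons]
      exact hrest
    · have hrnil : codeAux p (s.erase ℓ) = [] := by
        rw [codeAux, dif_neg]
        intro hl'
        exact h2 (hl'.mono (leaves_subset p (s.erase ℓ)))
      rw [hrnil]
      have hpℓ : p ℓ = 0 := by
        have hmem : p ℓ ∈ s.erase ℓ := Finset.mem_erase.mpr
          ⟨p_ne_self hℓ0 (h.2.2 ℓ hℓs), h.2.1 ℓ hℓs hℓ0⟩
        by_contra hne0
        exact h2 ⟨p ℓ, Finset.mem_erase.mpr ⟨hne0, hmem⟩⟩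
      simp [hpℓ]
      exact hpℓ

lemma codeAux_inj (p q : Fin n → Fin n) : ∀ s : Finset (Fin n), Inv p s → Inv q s →
    codeAux p s = codeAux q s → ∀ v ∈ s.erase 0, p v = q v := by
  intro s
  induction s using Finset.strongInduction with
  | _ s ih =>
    intro hp hq hcode v hv
    have hne : (s.erase 0).Nonempty := ⟨v, hv⟩
    have hlp := leaves_nonempty hp hne
    have hLL : leaves p s = leaves q s := by
      ext u
      simp only [leaves, Finset.mem_filter]
      constructor
      · rintro ⟨hu, hu2⟩
        refine ⟨hu, fun w hw hpw => ?_⟩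
        have : u ∈ codeAux q s := (codeAux_mem hq u).mpr ⟨w, hw, hpw⟩
        rw [← hcode] at this
        obtain ⟨w', hw', hpw'⟩ := (codeAux_mem hp u).mp this
        exact hu2 w' hw' hpw'
      · rintro ⟨hu, hu2⟩
        refine ⟨hu, fun w hw hpw => ?_⟩
        have : u ∈ codeAux p s := (codeAux_mem hp u).mpr ⟨w, hw, hpw⟩
        rw [hcode] at this
        obtain ⟨w', hw', hpw'⟩ := (codeAux_mem hq u).mp this
        exact hu2 w' hw' hpw'
    have hlq : (leaves q s).Nonempty := hLL ▸ hlp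
    have hℓeq : (leaves p s).max' hlp = (leaves q s).max' hlq := by
      congr 1
    set ℓ := (leaves p s).max' hlp with hℓdef
    have hℓ : ℓ ∈ leaves p s := Finset.max'_mem _ _
    have hℓe : ℓ ∈ s.erase 0 := leaves_subset _ _ hℓ
    have hℓs : ℓ ∈ s := Finset.mem_of_mem_erase hℓe
    have hunfold : ∀ (p' : Fin n → Fin n) (hl' : (leaves p' s).Nonempty),
        codeAux p' s
          = p' ((leaves p' s).max' hl') :: codeAux p' (s.erase ((leaves p' s).max' hl')) := by
      intro p' hl'
      conv_lhs => rw [codeAux]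
      rw [dif_pos hl']
    rw [hunfold p hlp, hunfold q hlq, ← hℓeq, ← hℓdef] at hcode
    simp only [List.cons.injEq] at hcode
    obtain ⟨hhead, htail⟩ := hcode
    by_cases hvℓ : v = ℓ
    · rw [hvℓ]; exact hhead
    · have hrec := ih (s.erase ℓ) (Finset.erase_ssubset hℓs) (hp.erase_leaf hℓ)
        (hq.erase_leaf (hLL ▸ hℓ)) htail
      refine hrec v (Finset.mem_erase.mpr ⟨Finset.ne_of_mem_erase hv, ?_⟩)
      exact Finset.mem_erase.mpr ⟨hvℓ, Finset.mem_of_mem_erase hv⟩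

/-- Cayley-type bound: the number of spanning parent-maps is at most `n ^ (n - 2)`. -/
lemma card_treeMap_le (n : ℕ) (hn : 2 ≤ n) :
    haveI : NeZero n := ⟨by omega⟩
    Fintype.card {p : Fin n → Fin n // p 0 = 0 ∧ ∀ v, ∃ k, p^[k] v = 0} ≤ n ^ (n - 2) := by
  haveI : NeZero n := ⟨by omega⟩
  classical
  have hinj : Function.Injective
      (fun P : {p : Fin n → Fin n // p 0 = 0 ∧ ∀ v, ∃ k, p^[k] v = 0} =>
        (fun k : Fin (n - 2) => (codeAux P.1 Finset.univ).getD k 0)) := by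
    rintro ⟨p, hp0, hpa⟩ ⟨q, hq0, hqa⟩ hpq
    have hinvp : Inv p Finset.univ :=
      ⟨Finset.mem_univ _, fun w _ _ => Finset.mem_univ _, fun v _ => hpa v⟩
    have hinvq : Inv q Finset.univ :=
      ⟨Finset.mem_univ _, fun w _ _ => Finset.mem_univ _, fun v _ => hqa v⟩
    have hlp : (codeAux p Finset.univ).length = n - 1 := by
      rw [codeAux_length hinvp, Finset.card_univ, Fintype.card_fin]
    have hlq : (codeAux q Finset.univ).length = n - 1 := by
      rw [codeAux_length hinvq, Finset.card_univ, Fintype.card_fin]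
    have huniv : ((Finset.univ : Finset (Fin n)).erase 0).Nonempty := by
      refine ⟨⟨1, by omega⟩, Finset.mem_erase.mpr ⟨?_, Finset.mem_univ _⟩⟩
      intro hcon
      simp [Fin.ext_iff] at hcon
    have hgp := codeAux_getLast? p Finset.univ hinvp huniv
    have hgq := codeAux_getLast? q Finset.univ hinvq huniv
    have hcode : codeAux p Finset.univ = codeAux q Finset.univ := by
      apply List.ext_getElem (by rw [hlp, hlq])
      intro j h1 h2
      rcases lt_or_ge j (n - 2) with hj | hj
      · have e : (codeAux p Finset.univ).getD j 0 = (codeAux q Finset.univ).getD j 0 :=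
          congrFun hpq ⟨j, hj⟩
        rw [List.getD_eq_getElem _ _ (show j < (codeAux p Finset.univ).length by omega)] at e
        rw [List.getD_eq_getElem _ _ (show j < (codeAux q Finset.univ).length by omega)] at e
        exact e
      · have hjeq : j = n - 1 - 1 := by omega
        subst hjeq
        have tp := hgp
        rw [List.getLast?_eq_getElem?, hlp, List.getElem?_eq_getElem (by omega)] at tp
        have tq := hgq
        rw [List.getLast?_eq_getElem?, hlq, List.getElem?_eq_getElem (by omega)] at tq
        rw [Option.some.inj tp, Option.some.inj tq]
    have hvv := codeAux_inj p q Finset.univ hinvp hinvq hcode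
    apply Subtype.ext
    funext v
    show p v = q v
    by_cases hv0 : v = 0
    · rw [hv0, hp0, hq0]
    · exact hvv v (Finset.mem_erase.mpr ⟨hv0, Finset.mem_univ _⟩)
  calc Fintype.card {p : Fin n → Fin n // p 0 = 0 ∧ ∀ v, ∃ k, p^[k] v = 0}
      ≤ Fintype.card (Fin (n - 2) → Fin n) := Fintype.card_le_of_injective _ hinj
    _ = n ^ (n - 2) := by simp [Fintype.card_fun]

end Code

/-- A connected graph on `Fin n` has a spanning "parent-map" tree rooted at `0`. -/
lemma exists_treeMap [NeZero n] {G : SimpleGraph (Fin n)} (hG : G.Connected) :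
    ∃ p : Fin n → Fin n, p 0 = 0 ∧ (∀ v, ∃ k, p^[k] v = 0) ∧
      ∀ v, v ≠ 0 → G.Adj v (p v) := by
  classical
  have hstep : ∀ v : Fin n, v ≠ 0 → ∃ w, G.Adj v w ∧ G.dist w 0 < G.dist v 0 := by
    intro v hv
    have hreach : G.Reachable v 0 := hG.preconnected v 0
    obtain ⟨wlk, hwlk⟩ := hreach.exists_walk_length_eq_dist
    cases wlk with
    | nil => exact absurd rfl hv
    | @cons _ b _ hadj q =>
      refine ⟨b, hadj, ?_⟩
      have h1 : G.dist b 0 ≤ q.length := SimpleGraph.dist_le q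
      have h2 : q.length + 1 = G.dist v 0 := by
        rw [← hwlk]; simp [SimpleGraph.Walk.length_cons]
      omega
  choose w hw using hstep
  refine ⟨fun v => if h : v = 0 then 0 else w v h, by simp, ?_, ?_⟩
  · have key : ∀ m : ℕ, ∀ v : Fin n, G.dist v 0 ≤ m →
        ∃ k, (fun v => if h : v = 0 then 0 else w v h)^[k] v = 0 := by
      intro m
      induction m with
      | zero =>
        intro v hv
        by_cases h0 : v = 0
        · exact ⟨0, h0⟩
        · exfalso
          have := (hw v h0).2
          omega
      | succ m ih =>
        intro v hv
        by_cases h0 : v = 0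
        · exact ⟨0, h0⟩
        · obtain ⟨k, hk⟩ := ih (w v h0) (by have := (hw v h0).2; omega)
          refine ⟨k + 1, ?_⟩
          rw [Function.iterate_succ_apply]
          simpa [h0] using hk
    exact fun v => key (G.dist v 0) v le_rfl
  · intro v hv
    simpa [hv] using (hw v hv).1

section Measure

variable {E : Type*} [MeasurableSpace E]

lemma marginal_prod_le [NeZero n] (μ : Measure E) [IsProbabilityMeasure μ]
    (W : Set (E × E)) (hW : MeasurableSet W) (Q : ℝ≥0∞) (hQtop : Q ≠ ⊤)
    (hQ : ∀ z, μ {a | (a, z) ∈ W} ≤ Q) (p : Fin n → Fin n) :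
    ∀ t : Finset (Fin n), (0 : Fin n) ∉ t → (∀ v ∈ t, ∃ k, p^[k] v = 0) →
      (∫⋯∫⁻_t, (fun y => ∏ v ∈ t, if (y v, y (p v)) ∈ W then (1 : ℝ≥0∞) else 0)
          ∂(fun _ : Fin n => μ))
        ≤ fun _ => Q ^ t.card := by
  have hgm : ∀ v : Fin n,
      Measurable fun y : Fin n → E => if (y v, y (p v)) ∈ W then (1 : ℝ≥0∞) else 0 := by
    intro v
    have hset : MeasurableSet {y : Fin n → E | (y v, y (p v)) ∈ W} :=
      ((measurable_pi_apply v).prodMk (measurable_pi_apply (p v))) hW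
    exact Measurable.ite hset measurable_const measurable_const
  intro t
  induction t using Finset.strongInduction with
  | _ t ih =>
    intro h0 hac
    rcases t.eq_empty_or_nonempty with rfl | hne
    · rw [lmarginal_empty]
      intro x
      simp
    · obtain ⟨ℓ, hℓt, hleaf⟩ := exists_leaf p t h0 hac hne
      have hℓ0 : ℓ ≠ 0 := fun h => h0 (h ▸ hℓt)
      have hpℓ : p ℓ ≠ ℓ := p_ne_self hℓ0 (hac ℓ hℓt)
      have hFm : Measurable fun y : Fin n → E =>
          ∏ v ∈ t, if (y v, y (p v)) ∈ W then (1 : ℝ≥0∞) else 0 :=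
        Finset.measurable_prod _ fun v _ => hgm v
      rw [lmarginal_erase' _ hFm hℓt]
      have hpoint : ∀ x : Fin n → E,
          (∫⁻ y, (∏ v ∈ t, if ((Function.update x ℓ y) v, (Function.update x ℓ y) (p v)) ∈ W
            then (1 : ℝ≥0∞) else 0) ∂μ)
          ≤ Q * ∏ v ∈ t.erase ℓ, if (x v, x (p v)) ∈ W then (1 : ℝ≥0∞) else 0 := by
        intro x
        have hsplit : ∀ y : E,
            (∏ v ∈ t, if ((Function.update x ℓ y) v, (Function.update x ℓ y) (p v)) ∈ W
              then (1 : ℝ≥0∞) else 0)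
            = (if (y, x (p ℓ)) ∈ W then (1 : ℝ≥0∞) else 0)
              * ∏ v ∈ t.erase ℓ, if (x v, x (p v)) ∈ W then (1 : ℝ≥0∞) else 0 := by
          intro y
          rw [← Finset.mul_prod_erase t _ hℓt]
          congr 1
          · rw [Function.update_self, Function.update_of_ne hpℓ]
          · refine Finset.prod_congr rfl fun v hv => ?_
            have hvℓ : v ≠ ℓ := Finset.ne_of_mem_erase hv
            have hpvℓ : p v ≠ ℓ := hleaf v (Finset.mem_of_mem_erase hv)
            rw [Function.update_of_ne hvℓ, Function.update_of_ne hpvℓ]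
        simp_rw [hsplit]
        have hslice : MeasurableSet {a : E | (a, x (p ℓ)) ∈ W} :=
          (measurable_id.prodMk measurable_const) hW
        have hitem : Measurable fun y : E => if (y, x (p ℓ)) ∈ W then (1 : ℝ≥0∞) else 0 :=
          Measurable.ite hslice measurable_const measurable_const
        rw [lintegral_mul_const _ hitem]
        have hint : (∫⁻ y, (if (y, x (p ℓ)) ∈ W then (1 : ℝ≥0∞) else 0) ∂μ)
            = μ {a : E | (a, x (p ℓ)) ∈ W} := by
          have heq : (fun y : E => if (y, x (p ℓ)) ∈ W then (1 : ℝ≥0∞) else 0)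
              = Set.indicator {a : E | (a, x (p ℓ)) ∈ W} 1 := by
            funext y
            rw [Set.indicator_apply]
            rfl
          rw [heq, lintegral_indicator_one hslice]
        rw [hint]
        exact mul_le_mul_left (hQ _) _
      have hcard : (t.erase ℓ).card + 1 = t.card := by
        rw [Finset.card_erase_of_mem hℓt]
        have := Finset.card_pos.mpr ⟨ℓ, hℓt⟩
        omega
      calc (∫⋯∫⁻_(t.erase ℓ),
              (fun x => ∫⁻ xᵢ, (∏ v ∈ t, if ((Function.update x ℓ xᵢ) v,
                (Function.update x ℓ xᵢ) (p v)) ∈ W then (1 : ℝ≥0∞) else 0) ∂μ)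
              ∂(fun _ : Fin n => μ))
          ≤ ∫⋯∫⁻_(t.erase ℓ),
              (fun x => Q * ∏ v ∈ t.erase ℓ, if (x v, x (p v)) ∈ W then (1 : ℝ≥0∞) else 0)
              ∂(fun _ : Fin n => μ) := lmarginal_mono fun x => hpoint x
        _ = fun x => Q * (∫⋯∫⁻_(t.erase ℓ),
              (fun x => ∏ v ∈ t.erase ℓ, if (x v, x (p v)) ∈ W then (1 : ℝ≥0∞) else 0)
              ∂(fun _ : Fin n => μ)) x := by
            funext x
            simp only [lmarginal]
            exact lintegral_const_mul' _ _ hQtop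
        _ ≤ fun _ => Q * Q ^ (t.erase ℓ).card := by
            intro x
            exact mul_le_mul_right
              (ih (t.erase ℓ) (Finset.erase_ssubset hℓt)
                (fun h => h0 (Finset.mem_of_mem_erase h))
                (fun v hv => hac v (Finset.mem_of_mem_erase hv)) x) _
        _ = fun _ => Q ^ t.card := by
            funext x
            rw [← pow_succ', hcard]

lemma pi_event_le [NeZero n] [Nonempty E] (μ : Measure E) [IsProbabilityMeasure μ]
    (W : Set (E × E)) (hW : MeasurableSet W) (Q : ℝ≥0∞) (hQtop : Q ≠ ⊤)
    (hQ : ∀ z, μ {a | (a, z) ∈ W} ≤ Q) (p : Fin n → Fin n)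
    (hac : ∀ v, ∃ k, p^[k] v = 0) :
    (Measure.pi fun _ : Fin n => μ) {x | ∀ v : Fin n, v ≠ 0 → (x v, x (p v)) ∈ W}
      ≤ Q ^ (n - 1) := by
  classical
  set A : Set (Fin n → E) := {x | ∀ v : Fin n, v ≠ 0 → (x v, x (p v)) ∈ W} with hA
  set F : (Fin n → E) → ℝ≥0∞ := fun y =>
    ∏ v ∈ Finset.univ.erase (0 : Fin n), if (y v, y (p v)) ∈ W then (1 : ℝ≥0∞) else 0 with hF
  have hgm : ∀ v : Fin n,
      Measurable fun y : Fin n → E => if (y v, y (p v)) ∈ W then (1 : ℝ≥0∞) else 0 := by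
    intro v
    have hset : MeasurableSet {y : Fin n → E | (y v, y (p v)) ∈ W} :=
      ((measurable_pi_apply v).prodMk (measurable_pi_apply (p v))) hW
    exact Measurable.ite hset measurable_const measurable_const
  have hFm : Measurable F := Finset.measurable_prod _ fun v _ => hgm v
  have hAm : MeasurableSet A := by
    have heq : A = ⋂ v ∈ Finset.univ.erase (0 : Fin n), {x : Fin n → E | (x v, x (p v)) ∈ W} := by
      ext x
      simp [hA, Finset.mem_erase]
    rw [heq]
    exact Set.Finite.measurableSet_biInter (Set.toFinite _) fun v _ =>
      ((measurable_pi_apply v).prodMk (measurable_pi_apply (p v))) hW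
  have hind : ∀ x, Set.indicator A 1 x ≤ F x := by
    intro x
    by_cases hx : x ∈ A
    · rw [Set.indicator_of_mem hx]
      have : F x = 1 := by
        rw [hF]
        refine Finset.prod_eq_one fun v hv => ?_
        rw [if_pos (hx v (Finset.ne_of_mem_erase hv))]
      rw [this]
      exact le_rfl
    · rw [Set.indicator_of_notMem hx]
      exact zero_le
  have hcard : (Finset.univ.erase (0 : Fin n)).card = n - 1 := by
    rw [Finset.card_erase_of_mem (Finset.mem_univ _), Finset.card_univ, Fintype.card_fin]
  obtain ⟨x₀⟩ : Nonempty (Fin n → E) := inferInstance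
  calc (Measure.pi fun _ : Fin n => μ) A
      = ∫⁻ x, Set.indicator A 1 x ∂(Measure.pi fun _ : Fin n => μ) :=
        (lintegral_indicator_one hAm).symm
    _ ≤ ∫⁻ x, F x ∂(Measure.pi fun _ : Fin n => μ) := lintegral_mono hind
    _ = (∫⋯∫⁻_(Finset.univ), F ∂(fun _ : Fin n => μ)) x₀ := lintegral_eq_lmarginal_univ x₀
    _ = ∫⁻ y, (∫⋯∫⁻_(Finset.univ.erase 0), F ∂(fun _ : Fin n => μ))
          (Function.update x₀ 0 y) ∂μ := by
        conv_lhs => rw [show (Finset.univ : Finset (Fin n)) = insert 0 (Finset.univ.erase 0) from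
          (Finset.insert_erase (Finset.mem_univ 0)).symm]
        exact lmarginal_insert F hFm (Finset.notMem_erase _ _) x₀
    _ ≤ ∫⁻ _, Q ^ (n - 1) ∂μ := by
        refine lintegral_mono fun y => ?_
        have := marginal_prod_le μ W hW Q hQtop hQ p (Finset.univ.erase 0)
          (Finset.notMem_erase _ _) (fun v _ => hac v) (Function.update x₀ 0 y)
        rwa [hcard] at this
    _ = Q ^ (n - 1) := by
        rw [lintegral_const, measure_univ, mul_one]

end Measure

end GeomAux


/-- The probability that the geometric graph on `i` i.i.d. points with essentially bounded
density `f` and radius `r` is connected is at most `i^{i-2}·(r^d·‖f‖_∞·θ_d)^{i-1}`. -/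
theorem prob_geomGraph_connected_le (d i : ℕ) (hd : 1 ≤ d) (hi : 1 ≤ i)
    {Ω : Type} [MeasurableSpace Ω] (P : Measure Ω) [IsProbabilityMeasure P]
    (f : EuclideanSpace ℝ (Fin d) → ℝ) (hf : ∀ x, 0 ≤ f x)
    (Mf : ℝ) (hMf : ∀ᵐ x ∂(volume : Measure (EuclideanSpace ℝ (Fin d))), f x ≤ Mf)
    (X : Fin i → Ω → EuclideanSpace ℝ (Fin d))
    (hmeas : ∀ j, Measurable (X j))
    -- i.i.d. with common density `f`
    (hindep : iIndepFun X P)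
    (hlaw : ∀ j, P.map (X j) = volume.withDensity (fun x => ENNReal.ofReal (f x)))
    (r : ℝ) (hr : 0 < r) :
    P {ω | (geomGraph r (fun j => X j ω)).Connected}
      ≤ ENNReal.ofReal ((i : ℝ) ^ (i - 2) *
          (r ^ d * Mf * (volume (Metric.ball (0 : EuclideanSpace ℝ (Fin d)) 1)).toReal)
            ^ (i - 1)) := by
  classical
  rcases eq_or_lt_of_le hi with h1 | h2
  · -- the case `i = 1` : the bound is `1`
    subst h1
    norm_num
    exact prob_le_one
  · have hi2 : 2 ≤ i := h2
    haveI : NeZero i := ⟨by omega⟩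
    set μ : Measure (EuclideanSpace ℝ (Fin d)) := volume.withDensity (fun x => ENNReal.ofReal (f x)) with hμ
    haveI hPμ : IsProbabilityMeasure μ := by
      rw [← hlaw 0]
      exact Measure.isProbabilityMeasure_map (hmeas 0).aemeasurable
    haveI : Nontrivial (EuclideanSpace ℝ (Fin d)) := by
      apply Module.nontrivial_of_finrank_pos (R := ℝ)
      rw [finrank_euclideanSpace_fin]
      omega
    set W : Set (EuclideanSpace ℝ (Fin d) × EuclideanSpace ℝ (Fin d)) := {q | dist q.1 q.2 < r} with hWdef
    have hWm : MeasurableSet W :=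
      (isOpen_lt continuous_dist continuous_const).measurableSet
    set θ : ℝ≥0∞ := volume (Metric.ball (0 : EuclideanSpace ℝ (Fin d)) 1) with hθ
    set Q : ℝ≥0∞ := ENNReal.ofReal (r ^ d * Mf) * θ with hQdef
    have hMf0 : 0 ≤ Mf := by
      have hvol : (volume : Measure (EuclideanSpace ℝ (Fin d))) ≠ 0 := by
        intro hcon
        have hpos := measure_ball_pos (volume : Measure (EuclideanSpace ℝ (Fin d))) (0 : EuclideanSpace ℝ (Fin d)) one_pos
        rw [hcon] at hpos
        simp at hpos
      haveI : (MeasureTheory.ae (volume : Measure (EuclideanSpace ℝ (Fin d)))).NeBot := ae_neBot.mpr hvol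
      obtain ⟨x, hx⟩ := hMf.exists
      exact (hf x).trans hx
    have hQtop : Q ≠ ⊤ := ENNReal.mul_ne_top ENNReal.ofReal_ne_top measure_ball_lt_top.ne
    have hQ : ∀ z : EuclideanSpace ℝ (Fin d), μ {a | (a, z) ∈ W} ≤ Q := by
      intro z
      have hball : {a : EuclideanSpace ℝ (Fin d) | (a, z) ∈ W} = Metric.ball z r := rfl
      rw [hball, hμ, withDensity_apply _ measurableSet_ball]
      calc ∫⁻ a in Metric.ball z r, ENNReal.ofReal (f a) ∂volume
          ≤ ∫⁻ _ in Metric.ball z r, ENNReal.ofReal Mf ∂volume := by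
            apply lintegral_mono_ae
            exact ae_restrict_of_ae (hMf.mono fun x hx => ENNReal.ofReal_le_ofReal hx)
        _ = ENNReal.ofReal Mf * volume (Metric.ball z r) := by
            rw [setLIntegral_const]
        _ = ENNReal.ofReal Mf * (ENNReal.ofReal (r ^ d) * θ) := by
            rw [Measure.addHaar_ball volume z hr.le, finrank_euclideanSpace_fin, hθ]
        _ = Q := by
            rw [hQdef, ENNReal.ofReal_mul (pow_nonneg hr.le d)]
            ring
    set Y : Ω → (Fin i → EuclideanSpace ℝ (Fin d)) := fun ω j => X j ω with hY
    have hYm : Measurable Y := measurable_pi_lambda _ hmeas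
    have hmap : P.map Y = Measure.pi (fun _ : Fin i => μ) := by
      refine (Measure.pi_eq fun A hA => ?_).symm
      rw [Measure.map_apply hYm (MeasurableSet.univ_pi hA)]
      have hpre : Y ⁻¹' Set.pi Set.univ A = ⋂ j ∈ Finset.univ, X j ⁻¹' A j := by
        ext ω
        simp [hY, Set.mem_pi]
      rw [hpre, iIndepFun_iff_measure_inter_preimage_eq_mul.mp hindep Finset.univ
        (fun j _ => hA j)]
      refine Finset.prod_congr rfl fun j _ => ?_
      rw [← Measure.map_apply (hmeas j) (hA j), hlaw j]
    set S : Finset (Fin i → Fin i) :=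
      Finset.univ.filter (fun p => p 0 = 0 ∧ ∀ v, ∃ k, p^[k] v = 0) with hS
    have hApm : ∀ p : Fin i → Fin i,
        MeasurableSet {x : Fin i → EuclideanSpace ℝ (Fin d) | ∀ v : Fin i, v ≠ 0 → (x v, x (p v)) ∈ W} := by
      intro p
      have heq : {x : Fin i → EuclideanSpace ℝ (Fin d) | ∀ v : Fin i, v ≠ 0 → (x v, x (p v)) ∈ W}
          = ⋂ v ∈ Finset.univ.erase (0 : Fin i), {x : Fin i → EuclideanSpace ℝ (Fin d) | (x v, x (p v)) ∈ W} := by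
        ext x
        simp [Finset.mem_erase]
      rw [heq]
      exact Set.Finite.measurableSet_biInter (Set.toFinite _) fun v _ =>
        ((measurable_pi_apply v).prodMk (measurable_pi_apply (p v))) hWm
    have hsub : {ω | (geomGraph r (fun j => X j ω)).Connected}
        ⊆ Y ⁻¹' (⋃ p ∈ S, {x : Fin i → EuclideanSpace ℝ (Fin d) | ∀ v : Fin i, v ≠ 0 → (x v, x (p v)) ∈ W}) := by
      intro ω hω
      obtain ⟨p, hp0, hpa, hpadj⟩ := GeomAux.exists_treeMap (G := geomGraph r (Y ω)) hω
      refine Set.mem_preimage.mpr ?_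
      have hpS : p ∈ S := by
        rw [hS]
        exact Finset.mem_filter.mpr ⟨Finset.mem_univ _, hp0, hpa⟩
      refine Set.mem_biUnion hpS ?_
      · intro v hv
        have hadj := hpadj v hv
        rw [geomGraph, SimpleGraph.fromRel_adj] at hadj
        rcases hadj.2 with hlt | hlt
        · exact hlt
        · show dist (Y ω v) (Y ω (p v)) < r
          rw [dist_comm]
          exact hlt
    have hcard : S.card ≤ i ^ (i - 2) := by
      rw [hS, ← Fintype.card_subtype]
      exact GeomAux.card_treeMap_le i hi2
    have hRHS : ENNReal.ofReal ((i : ℝ) ^ (i - 2) * (r ^ d * Mf * θ.toReal) ^ (i - 1))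
        = ((i ^ (i - 2) : ℕ) : ℝ≥0∞) * Q ^ (i - 1) := by
      have hb : (0 : ℝ) ≤ r ^ d * Mf := mul_nonneg (pow_nonneg hr.le d) hMf0
      have hbase : (0 : ℝ) ≤ r ^ d * Mf * θ.toReal := mul_nonneg hb ENNReal.toReal_nonneg
      rw [ENNReal.ofReal_mul (by positivity), ENNReal.ofReal_pow hbase]
      congr 1
      · rw [show ((i : ℝ) ^ (i - 2)) = ((i ^ (i - 2) : ℕ) : ℝ) by push_cast; ring,
          ENNReal.ofReal_natCast]
      · congr 1
        rw [ENNReal.ofReal_mul hb, ENNReal.ofReal_toReal, hQdef]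
        rw [hθ]
        exact measure_ball_lt_top.ne
    rw [hRHS]
    calc P {ω | (geomGraph r fun j => X j ω).Connected}
        ≤ P (Y ⁻¹' (⋃ p ∈ S, {x : Fin i → EuclideanSpace ℝ (Fin d) | ∀ v : Fin i, v ≠ 0 → (x v, x (p v)) ∈ W})) :=
          measure_mono hsub
      _ = (P.map Y) (⋃ p ∈ S, {x : Fin i → EuclideanSpace ℝ (Fin d) | ∀ v : Fin i, v ≠ 0 → (x v, x (p v)) ∈ W}) :=
          (Measure.map_apply hYm
            (S.measurableSet_biUnion fun p _ => hApm p)).symm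
      _ = (Measure.pi fun _ : Fin i => μ)
            (⋃ p ∈ S, {x : Fin i → EuclideanSpace ℝ (Fin d) | ∀ v : Fin i, v ≠ 0 → (x v, x (p v)) ∈ W}) := by
          rw [hmap]
      _ ≤ ∑ p ∈ S, (Measure.pi fun _ : Fin i => μ)
            {x : Fin i → EuclideanSpace ℝ (Fin d) | ∀ v : Fin i, v ≠ 0 → (x v, x (p v)) ∈ W} :=
          measure_biUnion_finset_le S _
      _ ≤ ∑ _p ∈ S, Q ^ (i - 1) := by
          refine Finset.sum_le_sum fun p hp => ?_
          rw [hS] at hp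
          exact GeomAux.pi_event_le μ W hWm Q hQtop hQ p (Finset.mem_filter.mp hp).2.2
      _ = S.card • Q ^ (i - 1) := by rw [Finset.sum_const]
      _ ≤ ((i ^ (i - 2) : ℕ) : ℝ≥0∞) * Q ^ (i - 1) := by
          rw [nsmul_eq_mul]
          exact mul_le_mul_left (by exact_mod_cast hcard) _
end

section
/- Let X₁,…,X_{i₁}, Y₁,…,Y_{i₂} be i.i.d. random points in ℝ^d with essentially bounded density f, and r > 0. Then the probability that the geometric graphs on {X₁,…,X_{i₁}} and on {Y₁,…,Y_{i₂}} with radius r are each connected AND the unions of balls ⋃_j B(X_j; r) and ⋃_j B(Y_j; r) intersect, is at most 2^d · i₁^{i₁−1} · i₂^{i₂−1} · (r^d‖f‖_∞ θ_d)^{i₁+i₂−1}. -/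
open scoped Classical
open Metric MeasureTheory ProbabilityTheory
open scoped ENNReal



lemma map_eq_pi {Ω : Type} [MeasurableSpace Ω] (P : Measure Ω) [IsProbabilityMeasure P]
    {n : ℕ} {E : Type} [MeasurableSpace E] (μ : Measure E)
    (Z : Fin n → Ω → E) (hmeas : ∀ j, Measurable (Z j))
    (hindep : iIndepFun Z P)
    (hlaw : ∀ j, P.map (Z j) = μ) [IsProbabilityMeasure μ] :
    P.map (fun ω j => Z j ω) = Measure.pi (fun _ => μ) := by
  refine (Measure.pi_eq (fun s hs => ?_)).symm
  rw [Measure.map_apply (measurable_pi_lambda _ (fun j => hmeas j))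
    (MeasurableSet.univ_pi hs)]
  have : (fun ω j => Z j ω) ⁻¹' (Set.pi Set.univ s) = ⋂ j ∈ Finset.univ, Z j ⁻¹' s j := by
    ext ω; simp [Set.mem_pi]
  rw [this, hindep.measure_inter_preimage_eq_mul Finset.univ (fun i _ => hs i)]
  refine Finset.prod_congr rfl (fun j _ => ?_)
  rw [← hlaw j, Measure.map_apply (hmeas j) (hs j)]

lemma exists_parent_map {V : Type*} {G : SimpleGraph V} (h : G.Connected) (a : V) :
    ∃ p : V → V, p a = a ∧ (∀ k, k ≠ a → G.Adj (p k) k) ∧ ∀ k, ∃ m, p^[m] k = a := by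
  have step : ∀ k, k ≠ a → ∃ k', G.Adj k' k ∧ G.dist k' a < G.dist k a := by
    intro k hk
    have hdist : G.dist k a ≠ 0 := by
      simp [SimpleGraph.dist_ne_zero_iff_ne_and_reachable, hk, h.preconnected k a]
    obtain ⟨w, hw⟩ := (h.preconnected k a).exists_walk_length_eq_dist
    cases w with
    | nil => simp at hk
    | cons hadj w' =>
      refine ⟨_, hadj.symm, ?_⟩
      have := SimpleGraph.dist_le w'
      simp only [SimpleGraph.Walk.length_cons] at hw
      omega
  classical
  set p : V → V := fun k => if hk : k = a then a else Classical.choose (step k hk) with hp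
  refine ⟨p, by simp [hp], ?_, ?_⟩
  · intro k hk
    simp only [hp, dif_neg hk]
    exact (Classical.choose_spec (step k hk)).1
  · intro k
    have : ∀ D k, G.dist k a ≤ D → ∃ m, p^[m] k = a := by
      intro D
      induction D with
      | zero =>
        intro k hk
        by_cases hka : k = a
        · exact ⟨0, hka⟩
        · have hdist : G.dist k a ≠ 0 := by
            simp [SimpleGraph.dist_ne_zero_iff_ne_and_reachable, hka, h.preconnected k a]
          omega
      | succ D ih =>
        intro k hk
        by_cases hka : k = a
        · exact ⟨0, hka⟩
        · have hch := Classical.choose_spec (step k hka)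
          obtain ⟨m, hm⟩ := ih (Classical.choose (step k hka)) (by omega)
          refine ⟨m + 1, ?_⟩
          rw [Function.iterate_succ_apply]
          simpa only [hp, dif_neg hka] using hm
    exact this (G.dist k a) k le_rfl


lemma ball_density_bound {d : ℕ} (hd : 1 ≤ d)
    (f : EuclideanSpace ℝ (Fin d) → ℝ) (hf : ∀ x, 0 ≤ f x)
    (Mf : ℝ) (hMf : ∀ᵐ x ∂(volume : Measure (EuclideanSpace ℝ (Fin d))), f x ≤ Mf)
    {ρ : ℝ} (hρ : 0 ≤ ρ) (c : EuclideanSpace ℝ (Fin d)) :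
    (volume.withDensity (fun x => ENNReal.ofReal (f x))) (ball c ρ)
      ≤ ENNReal.ofReal (ρ ^ d * Mf *
          (volume (ball (0 : EuclideanSpace ℝ (Fin d)) 1)).toReal) := by
  haveI : Nonempty (Fin d) := ⟨⟨0, hd⟩⟩
  haveI : Nontrivial (EuclideanSpace ℝ (Fin d)) :=
    inferInstanceAs (Nontrivial (PiLp 2 fun _ : Fin d => ℝ))
  set θ := (volume (ball (0 : EuclideanSpace ℝ (Fin d)) 1)).toReal with hθ
  have hθ0 : 0 ≤ θ := ENNReal.toReal_nonneg
  have hMf0 : 0 ≤ Mf := by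
    have hne : (volume : Measure (EuclideanSpace ℝ (Fin d))) ≠ 0 := by
      intro h0
      have hpos := measure_ball_pos volume (0 : EuclideanSpace ℝ (Fin d)) one_pos
      rw [h0] at hpos; simp at hpos
    haveI := ae_neBot.mpr hne
    obtain ⟨x, hx⟩ := hMf.exists
    linarith [hf x]
  rw [withDensity_apply _ measurableSet_ball]
  have hb : ∫⁻ x in ball c ρ, ENNReal.ofReal (f x) ∂volume
      ≤ ∫⁻ _x in ball c ρ, ENNReal.ofReal Mf ∂volume := by
    refine lintegral_mono_ae ?_
    exact (ae_restrict_of_ae (hMf.mono (fun x hx => ENNReal.ofReal_le_ofReal hx)))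
  refine hb.trans ?_
  rw [setLIntegral_const]
  have hball : volume (ball c ρ) = ENNReal.ofReal (ρ ^ d) * ENNReal.ofReal θ := by
    rw [Measure.addHaar_ball volume c hρ, finrank_euclideanSpace_fin, hθ,
      ENNReal.ofReal_toReal measure_ball_lt_top.ne]
  rw [hball, ← ENNReal.ofReal_mul (by positivity), ← ENNReal.ofReal_mul (by positivity)]
  exact le_of_eq (by ring_nf)


lemma tree_event_measurable {E ι : Type} [MeasurableSpace E] [PseudoMetricSpace E]
    [OpensMeasurableSpace E] [SecondCountableTopology E] [Fintype ι] (a : ι) (p : ι → ι) (ρ : ι → ℝ) :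
    MeasurableSet {x : ι → E | ∀ k, k ≠ a → dist (x (p k)) (x k) < ρ k} := by
  have h : {x : ι → E | ∀ k, k ≠ a → dist (x (p k)) (x k) < ρ k}
      = ⋂ k, {x : ι → E | k ≠ a → dist (x (p k)) (x k) < ρ k} := by
    ext; simp [Set.mem_iInter]
  rw [h]
  refine MeasurableSet.iInter (fun k => ?_)
  by_cases hk : k = a
  · simp [hk]
  · have h2 : {x : ι → E | k ≠ a → dist (x (p k)) (x k) < ρ k}
        = {x : ι → E | dist (x (p k)) (x k) < ρ k} := by
      ext; simp [hk]
    rw [h2]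
    exact ((measurable_pi_apply (p k)).dist (measurable_pi_apply k)) measurableSet_Iio

lemma exists_leaf {ι : Type} [Fintype ι] (a : ι) (p : ι → ι) (hpa : p a = a)
    (hp : ∀ k, ∃ m, p^[m] k = a) (hcard : 2 ≤ Fintype.card ι) :
    ∃ ℓ, ℓ ≠ a ∧ p ℓ ≠ ℓ ∧ ∀ j, p j = ℓ → j = ℓ := by
  have hpos : ∀ k, k ≠ a → 0 < Nat.find (hp k) := by
    intro k hk
    by_contra hcon
    push_neg at hcon
    have h0 : Nat.find (hp k) = 0 := by omega
    have hs := Nat.find_spec (hp k)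
    rw [h0] at hs
    exact hk hs
  have hstep : ∀ k, k ≠ a → Nat.find (hp (p k)) < Nat.find (hp k) := by
    intro k hk
    have hD := hpos k hk
    have hspec := Nat.find_spec (hp k)
    have h2 : p^[Nat.find (hp k) - 1] (p k) = a := by
      rw [← Function.iterate_succ_apply, Nat.succ_eq_add_one, Nat.sub_add_cancel hD]
      exact hspec
    have h3 : Nat.find (hp (p k)) ≤ Nat.find (hp k) - 1 := Nat.find_le h2
    omega
  obtain ⟨ℓ, -, hmax⟩ := Finset.exists_max_image Finset.univ (fun k => Nat.find (hp k))
    ⟨a, Finset.mem_univ a⟩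
  haveI : Nontrivial ι := Fintype.one_lt_card_iff_nontrivial.mp (by omega)
  obtain ⟨b, hb⟩ := exists_ne a
  have hℓpos : 0 < Nat.find (hp ℓ) := lt_of_lt_of_le (hpos b hb) (hmax b (Finset.mem_univ b))
  have hℓa : ℓ ≠ a := by
    intro h
    have hs : Nat.find (hp a) = 0 := by
      have h0 : p^[0] a = a := rfl
      have h4 : Nat.find (hp a) ≤ 0 := Nat.find_le h0
      omega
    rw [h] at hℓpos
    omega
  refine ⟨ℓ, hℓa, ?_, ?_⟩
  · intro h
    obtain ⟨m, hm⟩ := hp ℓ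
    rw [Function.iterate_fixed h m] at hm
    exact hℓa hm
  · intro j hj
    by_contra hjℓ
    have hja : j ≠ a := by
      intro h; rw [h, hpa] at hj; exact hℓa hj.symm
    have h1 := hstep j hja
    rw [hj] at h1
    have h2 := hmax j (Finset.mem_univ j)
    omega

lemma tree_pi_bound {E : Type} [MeasurableSpace E] [PseudoMetricSpace E] [OpensMeasurableSpace E] [SecondCountableTopology E]
    (ν : Measure E) [IsProbabilityMeasure ν] :
    ∀ (N : ℕ) (ι : Type) (instι : Fintype ι) (dι : DecidableEq ι)
      (a : ι) (p : ι → ι), Fintype.card ι = N → p a = a → (∀ k, ∃ m, p^[m] k = a) →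
      ∀ (ρ : ι → ℝ) (C : ι → ℝ≥0∞), (∀ k c, ν (Metric.ball c (ρ k)) ≤ C k) →
    Measure.pi (fun _ : ι => ν) {x | ∀ k, k ≠ a → dist (x (p k)) (x k) < ρ k}
      ≤ ∏ k ∈ Finset.univ.erase a, C k := by
  intro N
  induction N using Nat.strong_induction_on with
  | _ N IH =>
  intro ι instι dι a p hcard hpa hp ρ C hC
  rcases le_or_gt (Fintype.card ι) 1 with hle | hlt
  · -- base case: one point
    haveI : Subsingleton ι := Fintype.card_le_one_iff_subsingleton.mp hle
    have hev : {x : ι → E | ∀ k, k ≠ a → dist (x (p k)) (x k) < ρ k} = Set.univ := by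
      ext x; simp only [Set.mem_setOf_eq, Set.mem_univ, iff_true]
      intro k hk; exact absurd (Subsingleton.elim k a) hk
    have herase : Finset.univ.erase a = (∅ : Finset ι) := by
      apply Finset.eq_empty_of_forall_notMem
      intro k hk
      exact (Finset.mem_erase.mp hk).1 (Subsingleton.elim k a)
    rw [hev, herase]
    simp
  · -- inductive step
    obtain ⟨ℓ, hℓa, hpℓ, hleaf⟩ := exists_leaf a p hpa hp hlt
    have haℓ : a ≠ ℓ := Ne.symm hℓa
    letI dι' : DecidableEq {j : ι // j ≠ ℓ} := Subtype.instDecidableEq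
    letI instι' : Fintype {j : ι // j ≠ ℓ} := Subtype.fintype _
    set a' : {j : ι // j ≠ ℓ} := ⟨a, haℓ⟩ with ha'
    set p' : {j : ι // j ≠ ℓ} → {j : ι // j ≠ ℓ} :=
      fun k => ⟨p k.val, fun h => k.2 (hleaf k.val h)⟩ with hp'def
    have hiter : ∀ (m : ℕ) (k : {j : ι // j ≠ ℓ}), (p'^[m] k).val = p^[m] k.val := by
      intro m
      induction m with
      | zero => intro k; rfl
      | succ m ih =>
        intro k
        rw [Function.iterate_succ_apply, Function.iterate_succ_apply, ih]
    have hpa' : p' a' = a' := Subtype.ext (by simp [hp'def, ha', hpa])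
    have hp'reach : ∀ k, ∃ m, p'^[m] k = a' := by
      intro k
      obtain ⟨m, hm⟩ := hp k.val
      exact ⟨m, Subtype.ext (by rw [hiter]; exact hm)⟩
    have hcard' : Fintype.card {j : ι // j ≠ ℓ} = N - 1 := by
      have h1 : Fintype.card {j : ι // ¬ j = ℓ}
          = Fintype.card ι - Fintype.card {j : ι // j = ℓ} :=
        Fintype.card_subtype_compl _
      rw [Fintype.card_subtype_eq] at h1
      rw [← hcard]
      exact h1
    have hcℓ : p ℓ ≠ ℓ := hpℓ
    set cℓ : {j : ι // j ≠ ℓ} := ⟨p ℓ, hcℓ⟩ with hcℓ'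
    set e := MeasurableEquiv.piEquivPiSubtypeProd (fun _ : ι => E) (fun j => j ≠ ℓ) with he
    have hmp := measurePreserving_piEquivPiSubtypeProd (fun _ : ι => ν) (fun j => j ≠ ℓ)
    haveI : Unique {j : ι // ¬ j ≠ ℓ} :=
      ⟨⟨⟨ℓ, by simp⟩⟩, fun j => Subtype.ext (not_ne_iff.mp j.2)⟩
    set u : {j : ι // ¬ j ≠ ℓ} := ⟨ℓ, by simp⟩ with hu
    set Brest := {y : {j : ι // j ≠ ℓ} → E | ∀ k, k ≠ a' → dist (y (p' k)) (y k) < ρ k.val}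
      with hBrest
    set B := {y : ({j : ι // j ≠ ℓ} → E) × ({j : ι // ¬ j ≠ ℓ} → E) |
        y.1 ∈ Brest ∧ dist (y.1 cℓ) (y.2 u) < ρ ℓ} with hB
    have hBrestMeas : MeasurableSet Brest := tree_event_measurable a' p' (fun k => ρ k.val)
    have hBMeas : MeasurableSet B := by
      refine MeasurableSet.inter (measurable_fst hBrestMeas) ?_
      exact (((measurable_pi_apply cℓ).comp measurable_fst).dist
          ((measurable_pi_apply u).comp measurable_snd)) measurableSet_Iio
    have hAB : {x : ι → E | ∀ k, k ≠ a → dist (x (p k)) (x k) < ρ k} = e ⁻¹' B := by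
      ext x
      have hex : e x = (fun k : {j : ι // j ≠ ℓ} => x k.val,
          fun k : {j : ι // ¬ j ≠ ℓ} => x k.val) := rfl
      simp only [Set.mem_preimage, hex, hB, hBrest, Set.mem_setOf_eq]
      constructor
      · intro hx
        exact ⟨fun k hk => hx k.val (fun h => hk (Subtype.ext h)), hx ℓ hℓa⟩
      · rintro ⟨h1, h2⟩ k hk
        by_cases hkℓ : k = ℓ
        · subst hkℓ; exact h2
        · exact h1 ⟨k, hkℓ⟩ (fun h => hk (congrArg Subtype.val h))
    rw [hAB, hmp.measure_preimage hBMeas.nullMeasurableSet]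
    have hprod : ((Measure.pi fun _ : {j : ι // j ≠ ℓ} => ν).prod
        (Measure.pi fun _ : {j : ι // ¬ j ≠ ℓ} => ν)) B
        = ∫⁻ y, Set.indicator Brest
            (fun y1 => ν (Metric.ball (y1 cℓ) (ρ ℓ))) y
            ∂(Measure.pi fun _ : {j : ι // j ≠ ℓ} => ν) := by
      rw [Measure.prod_apply hBMeas]
      congr 1
      ext y1
      by_cases hy : y1 ∈ Brest
      · have hsec : Prod.mk y1 ⁻¹' B = {w : {j : ι // ¬ j ≠ ℓ} → E |
            w u ∈ Metric.ball (y1 cℓ) (ρ ℓ)} := by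
          ext w
          simp only [Set.mem_preimage, hB, Set.mem_setOf_eq, hy, true_and, Metric.mem_ball]
          rw [dist_comm]
        rw [hsec, Set.indicator_of_mem hy]
        have hcyl : {w : {j : ι // ¬ j ≠ ℓ} → E | w u ∈ Metric.ball (y1 cℓ) (ρ ℓ)}
            = Set.pi Set.univ (fun _ => Metric.ball (y1 cℓ) (ρ ℓ)) := by
          ext w
          simp only [Set.mem_setOf_eq, Set.mem_pi, Set.mem_univ, forall_true_left]
          constructor
          · intro hw j
            have hj : j = u := Subtype.ext (not_ne_iff.mp j.2)
            rwa [hj]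
          · intro hw; exact hw u
        rw [hcyl, Measure.pi_pi]
        simp
      · have hsec : Prod.mk y1 ⁻¹' B = ∅ := by
          ext w; simp only [Set.mem_preimage, hB, Set.mem_setOf_eq, hy, false_and,
            Set.mem_empty_iff_false]
        rw [hsec, Set.indicator_of_notMem hy]
        simp
    rw [hprod]
    have hbound : ∫⁻ y, Set.indicator Brest
        (fun y1 => ν (Metric.ball (y1 cℓ) (ρ ℓ))) y ∂(Measure.pi fun _ : {j : ι // j ≠ ℓ} => ν)
        ≤ ∫⁻ y, Set.indicator Brest (fun _ => C ℓ) y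
            ∂(Measure.pi fun _ : {j : ι // j ≠ ℓ} => ν) := by
      refine lintegral_mono (fun y1 => ?_)
      by_cases hy : y1 ∈ Brest
      · rw [Set.indicator_of_mem hy, Set.indicator_of_mem hy]; exact hC ℓ _
      · rw [Set.indicator_of_notMem hy, Set.indicator_of_notMem hy]
    refine hbound.trans ?_
    rw [lintegral_indicator_const hBrestMeas]
    have hIH := IH (N - 1) (by omega) {j : ι // j ≠ ℓ} instι' dι' a' p' hcard' hpa' hp'reach
      (fun k => ρ k.val) (fun k => C k.val) (fun k c => hC k.val c)
    have hprodeq : (∏ k ∈ Finset.univ.erase a', C k.val)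
        = ∏ j ∈ (Finset.univ.erase a).erase ℓ, C j := by
      refine Finset.prod_bij (fun k _ => k.val) ?_ ?_ ?_ ?_
      · intro k hk
        rw [Finset.mem_erase] at hk
        rw [Finset.mem_erase, Finset.mem_erase]
        exact ⟨k.2, fun h => hk.1 (Subtype.ext h), Finset.mem_univ _⟩
      · intro k1 _ k2 _ h
        exact Subtype.ext h
      · intro j hj
        rw [Finset.mem_erase, Finset.mem_erase] at hj
        exact ⟨⟨j, hj.1⟩, Finset.mem_erase.mpr ⟨fun h => hj.2.1 (congrArg Subtype.val h),
          Finset.mem_univ _⟩, rfl⟩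
      · intro k _; rfl
    calc C ℓ * (Measure.pi fun _ : {j : ι // j ≠ ℓ} => ν) Brest
        ≤ C ℓ * ∏ j ∈ (Finset.univ.erase a).erase ℓ, C j := by
          refine mul_le_mul_right ?_ _
          rw [← hprodeq]
          exact hIH
      _ = ∏ j ∈ Finset.univ.erase a, C j :=
          Finset.mul_prod_erase _ _ (Finset.mem_erase.mpr ⟨hℓa, Finset.mem_univ ℓ⟩)


def IsRT {n : ℕ} (x : (Fin n) × (Fin n → Fin n)) : Prop :=
  x.2 x.1 = x.1 ∧ ∀ k, ∃ m, x.2^[m] k = x.1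

namespace Joyal

variable {n : ℕ} (z : Fin n) (T : {x : (Fin n) × (Fin n → Fin n) // IsRT x})

noncomputable def m : ℕ := Nat.find (T.2.2 z)
noncomputable def v (t : ℕ) : Fin n := T.1.2^[t] z
noncomputable def S : Finset (Fin n) := (Finset.range (m z T + 1)).image (v z T)
noncomputable def L : List (Fin n) := Finset.sort (S z T) (· ≤ ·)
noncomputable def q : Fin n → Fin n :=
  fun k => if k ∈ S z T then v z T ((L z T).idxOf k) else T.1.2 k

lemma hv0 : v z T 0 = z := rfl

lemma hvm : v z T (m z T) = T.1.1 := Nat.find_spec (T.2.2 z)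

lemma hvadd (s t : ℕ) : v z T (s + t) = T.1.2^[s] (v z T t) := Function.iterate_add_apply _ s t z

lemma hvsucc (t : ℕ) : v z T (t + 1) = T.1.2 (v z T t) := Function.iterate_succ_apply' _ t z

lemma hvinj : ∀ {s t}, s ≤ m z T → t ≤ m z T → v z T s = v z T t → s = t := by
  have key : ∀ s t, s < t → t ≤ m z T → v z T s ≠ v z T t := by
    intro s t hst htm heq
    have h1 : v z T (m z T - t + s) = T.1.1 := by
      rw [hvadd, heq, ← hvadd]
      rw [show m z T - t + t = m z T by omega]
      exact hvm z T
    have h2 : m z T ≤ m z T - t + s := Nat.find_le h1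
    omega
  intro s t hs ht heq
  rcases lt_trichotomy s t with h | h | h
  · exact absurd heq (key s t h ht)
  · exact h
  · exact absurd heq.symm (key t s h hs)

lemma hScard : (S z T).card = m z T + 1 := by
  rw [S, Finset.card_image_of_injOn, Finset.card_range]
  intro s hs t ht heq
  rw [Finset.mem_coe, Finset.mem_range] at hs ht
  exact hvinj z T (by omega) (by omega) heq

lemma hLlen : (L z T).length = m z T + 1 := by
  rw [L, Finset.length_sort, hScard]

lemma hmemS {t : ℕ} (ht : t ≤ m z T) : v z T t ∈ S z T := by
  rw [S]; exact Finset.mem_image_of_mem _ (Finset.mem_range.mpr (by omega))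

lemma haS : T.1.1 ∈ S z T := hvm z T ▸ hmemS z T le_rfl

lemma hzS : z ∈ S z T := hv0 z T ▸ hmemS z T (Nat.zero_le _)

lemma hSmem_ex {k : Fin n} (hk : k ∈ S z T) : ∃ t, t ≤ m z T ∧ v z T t = k := by
  rw [S, Finset.mem_image] at hk
  obtain ⟨t, ht, hvt⟩ := hk
  have := Finset.mem_range.mp ht
  exact ⟨t, by omega, hvt⟩

lemma hq_getElem (t : ℕ) (ht : t < (L z T).length) : q z T ((L z T)[t]) = v z T t := by
  have hmem : (L z T)[t] ∈ S z T := by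
    rw [← Finset.mem_sort (α := Fin n) (· ≤ ·)]
    exact List.getElem_mem ht
  have hnd : (L z T).Nodup := by rw [L]; exact Finset.sort_nodup _ _
  rw [q, if_pos hmem, hnd.idxOf_getElem t ht]

lemma hqS {k : Fin n} (hk : k ∈ S z T) : q z T k ∈ S z T := by
  rw [q, if_pos hk]
  have hlt : (L z T).idxOf k < (L z T).length :=
    List.idxOf_lt_length_iff.mpr ((Finset.mem_sort (α := Fin n) (· ≤ ·)).mpr hk)
  exact hmemS z T (by have := hLlen z T; omega)

lemma hq_notS {k : Fin n} (hk : k ∉ S z T) : q z T k = T.1.2 k := by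
  rw [q, if_neg hk]

lemma hqz (hz : ∀ k, z ≤ k) : q z T z = z := by
  have hne : L z T ≠ [] := by
    intro h
    have := hLlen z T
    rw [h] at this
    simp at this
  obtain ⟨b, tl, hbt⟩ := List.exists_cons_of_ne_nil hne
  have hbz : b = z := by
    have hbS : b ∈ S z T := by
      rw [← Finset.mem_sort (α := Fin n) (· ≤ ·), ← L, hbt]; exact List.mem_cons_self
    have hzL : z ∈ L z T := (Finset.mem_sort (α := Fin n) (· ≤ ·)).mpr (hzS z T)
    rw [hbt] at hzL
    have hle : z ≤ b := hz b
    rcases List.mem_cons.mp hzL with h | h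
    · exact h.symm ▸ rfl
    · have hsorted := Finset.pairwise_sort (S z T) (· ≤ ·)
      rw [← L, hbt] at hsorted
      have := (List.pairwise_cons.mp hsorted).1 z h
      exact le_antisymm this hle
  rw [hbz] at hbt
  rw [q, if_pos (hzS z T), hbt, List.idxOf_cons_self]
  exact hv0 z T

lemma hq_iter_S {k : Fin n} (hk : k ∈ S z T) (s : ℕ) : (q z T)^[s] k ∈ S z T := by
  induction s with
  | zero => exact hk
  | succ s ih => rw [Function.iterate_succ_apply']; exact hqS z T ih

lemma hsurjS {k : Fin n} (hk : k ∈ S z T) : ∃ k' ∈ S z T, q z T k' = k := by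
  obtain ⟨t, htm, hvt⟩ := hSmem_ex z T hk
  have hlt : t < (L z T).length := by rw [hLlen]; omega
  refine ⟨(L z T)[t], ?_, by rw [hq_getElem z T t hlt, hvt]⟩
  rw [← Finset.mem_sort (α := Fin n) (· ≤ ·)]
  exact List.getElem_mem hlt

lemma hperiodic {k : Fin n} (hk : k ∈ S z T) : ∃ N, 0 < N ∧ (q z T)^[N] k = k := by
  set e : {x // x ∈ S z T} → {x // x ∈ S z T} := fun s => ⟨q z T s.1, hqS z T s.2⟩ with he
  have hesurj : Function.Surjective e := by
    rintro ⟨k', hk'⟩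
    obtain ⟨k'', hk'', hqk⟩ := hsurjS z T hk'
    exact ⟨⟨k'', hk''⟩, Subtype.ext hqk⟩
  have hebij := Finite.surjective_iff_bijective.mp hesurj
  have heiter : ∀ (N : ℕ) (s : {x // x ∈ S z T}), (e^[N] s).1 = (q z T)^[N] s.1 := by
    intro N
    induction N with
    | zero => intro s; rfl
    | succ N ih =>
      intro s
      rw [Function.iterate_succ_apply, Function.iterate_succ_apply, ih]
  obtain ⟨i, j, hij, heq⟩ := Finite.exists_ne_map_eq_of_infinite (fun t : ℕ => e^[t] ⟨k, hk⟩)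
  have key : ∀ i j : ℕ, i < j → e^[i] ⟨k, hk⟩ = e^[j] ⟨k, hk⟩ →
      ∃ N, 0 < N ∧ (q z T)^[N] k = k := by
    intro i j hlt hkeq
    have h1 : e^[i + (j - i)] ⟨k, hk⟩ = e^[i] (e^[j-i] ⟨k, hk⟩) := Function.iterate_add_apply e i (j-i) _
    rw [show i + (j - i) = j by omega] at h1
    have h2 : e^[i] (e^[j-i] ⟨k, hk⟩) = e^[i] ⟨k, hk⟩ := by rw [← h1, hkeq]
    have h3 := (hebij.injective.iterate i) h2
    refine ⟨j - i, by omega, ?_⟩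
    have := heiter (j - i) ⟨k, hk⟩
    rw [h3] at this
    exact this.symm
  rcases lt_trichotomy i j with h | h | h
  · exact key i j h heq
  · exact absurd h hij
  · exact key j i h heq.symm

lemma hreachS (k : Fin n) : ∃ s, (q z T)^[s] k ∈ S z T := by
  have main : ∀ (D : ℕ) (k : Fin n), Nat.find (T.2.2 k) ≤ D → ∃ s, (q z T)^[s] k ∈ S z T := by
    intro D
    induction D with
    | zero =>
      intro k hk
      have h0 : Nat.find (T.2.2 k) = 0 := by omega
      have hs := Nat.find_spec (T.2.2 k)
      rw [h0] at hs
      rw [Function.iterate_zero_apply] at hs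
      exact ⟨0, by rw [Function.iterate_zero_apply, hs]; exact haS z T⟩
    | succ D ih =>
      intro k hk
      by_cases hkS : k ∈ S z T
      · exact ⟨0, hkS⟩
      · have hka : k ≠ T.1.1 := fun h => hkS (h ▸ haS z T)
        have hpos : 0 < Nat.find (T.2.2 k) := by
          by_contra hcon
          push_neg at hcon
          have h0 : Nat.find (T.2.2 k) = 0 := by omega
          have hs := Nat.find_spec (T.2.2 k)
          rw [h0] at hs
          exact hka hs
        have hstep : Nat.find (T.2.2 (T.1.2 k)) ≤ D := by
          have hs := Nat.find_spec (T.2.2 k)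
          have h2 : T.1.2^[Nat.find (T.2.2 k) - 1] (T.1.2 k) = T.1.1 := by
            rw [← Function.iterate_succ_apply, Nat.succ_eq_add_one,
              Nat.sub_add_cancel hpos]
            exact hs
          have h3 : Nat.find (T.2.2 (T.1.2 k)) ≤ Nat.find (T.2.2 k) - 1 := Nat.find_le h2
          omega
        obtain ⟨s, hs⟩ := ih (T.1.2 k) hstep
        refine ⟨s + 1, ?_⟩
        rw [Function.iterate_succ_apply, hq_notS z T hkS]
        exact hs
  exact main (Nat.find (T.2.2 k)) k le_rfl

lemma hS_eq_periodicSet :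
    S z T = Finset.univ.filter (fun k => ∃ N, 0 < N ∧ (q z T)^[N] k = k) := by
  ext k
  simp only [Finset.mem_filter, Finset.mem_univ, true_and]
  constructor
  · exact fun hk => hperiodic z T hk
  · rintro ⟨N, hN, hqN⟩
    obtain ⟨s, hs⟩ := hreachS z T k
    have hfix : (q z T)^[N * s] k = k := by
      rw [Function.iterate_mul]
      exact Function.iterate_fixed hqN s
    rcases Nat.eq_zero_or_pos s with hs0 | hs0
    · rw [hs0] at hs; exact hs
    · have hge : s ≤ N * s := Nat.le_mul_of_pos_left s hN
      have h2 : (q z T)^[(N * s - s) + s] k ∈ S z T := by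
        rw [Function.iterate_add_apply]
        exact hq_iter_S z T hs _
      rw [show N * s - s + s = N * s by omega, hfix] at h2
      exact h2

lemma injective_phi (hz : ∀ k : Fin n, z ≤ k) :
    Function.Injective (fun (T : {x : (Fin n) × (Fin n → Fin n) // IsRT x}) =>
      (fun k : {k : Fin n // k ≠ z} => q z T k.val)) := by
  intro T1 T2 hq12
  have hq : q z T1 = q z T2 := by
    funext k
    by_cases hk : k = z
    · rw [hk, hqz z T1 hz, hqz z T2 hz]
    · exact congrFun hq12 ⟨k, hk⟩
  have hS : S z T1 = S z T2 := by
    rw [hS_eq_periodicSet z T1, hS_eq_periodicSet z T2, hq]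
  have hm : m z T1 = m z T2 := by
    have h1 := hScard z T1
    have h2 := hScard z T2
    rw [hS] at h1
    omega
  have hL : L z T1 = L z T2 := by rw [L, L, hS]
  have hv : ∀ t, t ≤ m z T1 → v z T1 t = v z T2 t := by
    intro t ht
    have hlt1 : t < (L z T1).length := by rw [hLlen]; omega
    have hlt2 : t < (L z T2).length := by rw [hLlen, ← hm]; omega
    rw [← hq_getElem z T1 t hlt1, ← hq_getElem z T2 t hlt2, hq]
    congr 1
    simp only [hL]
  have ha : T1.1.1 = T2.1.1 := by
    rw [← hvm z T1, ← hvm z T2, ← hm]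
    exact hv _ le_rfl
  have hp : T1.1.2 = T2.1.2 := by
    funext k
    by_cases hk : k ∈ S z T1
    · obtain ⟨t, htm, hvt⟩ := hSmem_ex z T1 hk
      by_cases hka : k = T1.1.1
      · rw [hka, T1.2.1, ha, T2.2.1]
      · have htm' : t < m z T1 := by
          rcases lt_or_eq_of_le htm with h | h
          · exact h
          · exfalso; apply hka; rw [← hvt, h, hvm]
        calc T1.1.2 k = v z T1 (t+1) := by rw [← hvt, ← hvsucc]
          _ = v z T2 (t+1) := hv _ (by omega)
          _ = T2.1.2 (v z T2 t) := by rw [hvsucc]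
          _ = T2.1.2 k := by rw [← hv t (by omega), hvt]
    · rw [← hq_notS z T1 hk, hq, hq_notS z T2 (by rw [← hS]; exact hk)]
  exact Subtype.ext (Prod.ext_iff.mpr ⟨ha, hp⟩)

end Joyal

theorem card_RT_le (n : ℕ) (hn : 0 < n) :
    Fintype.card {x : (Fin n) × (Fin n → Fin n) // IsRT x} ≤ n ^ (n - 1) := by
  set z : Fin n := ⟨0, hn⟩ with hzdef
  have hz : ∀ k : Fin n, z ≤ k := fun k => by
    rw [hzdef]
    exact Fin.mk_le_of_le_val (Nat.zero_le _)
  have hcard := Fintype.card_le_of_injective _ (Joyal.injective_phi z hz)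
  have h1 : Fintype.card ({k : Fin n // k ≠ z} → Fin n) = n ^ (n - 1) := by
    rw [Fintype.card_fun, Fintype.card_fin]
    congr 1
    have h2 : Fintype.card {k : Fin n // ¬ k = z}
        = Fintype.card (Fin n) - Fintype.card {k : Fin n // k = z} :=
      Fintype.card_subtype_compl _
    rw [Fintype.card_subtype_eq, Fintype.card_fin] at h2
    exact h2
  rw [h1] at hcard
  exact hcard



/-- combined parent map -/
noncomputable def combP {i₁ i₂ : ℕ} (a : Fin i₁) (p₁ : Fin i₁ → Fin i₁)
    (b : Fin i₂) (p₂ : Fin i₂ → Fin i₂) : Fin (i₁ + i₂) → Fin (i₁ + i₂) :=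
  Fin.addCases
    (fun j => if j = a then Fin.natAdd i₁ b else Fin.castAdd i₂ (p₁ j))
    (fun j => Fin.natAdd i₁ (p₂ j))

lemma combP_root {i₁ i₂ : ℕ} (a : Fin i₁) (p₁ : Fin i₁ → Fin i₁)
    (b : Fin i₂) (p₂ : Fin i₂ → Fin i₂) (hpb : p₂ b = b) :
    combP a p₁ b p₂ (Fin.natAdd i₁ b) = Fin.natAdd i₁ b := by
  rw [combP, Fin.addCases_right, hpb]

lemma combP_right_iter {i₁ i₂ : ℕ} (a : Fin i₁) (p₁ : Fin i₁ → Fin i₁)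
    (b : Fin i₂) (p₂ : Fin i₂ → Fin i₂) :
    ∀ (m : ℕ) (j : Fin i₂),
      (combP a p₁ b p₂)^[m] (Fin.natAdd i₁ j) = Fin.natAdd i₁ (p₂^[m] j) := by
  intro m
  induction m with
  | zero => intro j; rfl
  | succ m ih =>
    intro j
    rw [Function.iterate_succ_apply, Function.iterate_succ_apply,
      show combP a p₁ b p₂ (Fin.natAdd i₁ j) = Fin.natAdd i₁ (p₂ j) by
        rw [combP, Fin.addCases_right], ih]

lemma combP_reach {i₁ i₂ : ℕ} (a : Fin i₁) (p₁ : Fin i₁ → Fin i₁)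
    (b : Fin i₂) (p₂ : Fin i₂ → Fin i₂) (hpb : p₂ b = b)
    (h₁ : ∀ j, ∃ m, p₁^[m] j = a) (h₂ : ∀ j, ∃ m, p₂^[m] j = b) :
    ∀ k, ∃ m, (combP a p₁ b p₂)^[m] k = Fin.natAdd i₁ b := by
  have hleft : ∀ (M : ℕ) (j : Fin i₁), p₁^[M] j = a →
      ∃ m, (combP a p₁ b p₂)^[m] (Fin.castAdd i₂ j) = Fin.natAdd i₁ b := by
    intro M
    induction M with
    | zero =>
      intro j hj
      simp only [Function.iterate_zero_apply] at hj
      refine ⟨1, ?_⟩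
      rw [Function.iterate_one, combP, Fin.addCases_left, if_pos hj]
    | succ M ih =>
      intro j hj
      by_cases hja : j = a
      · refine ⟨1, ?_⟩
        rw [Function.iterate_one, combP, Fin.addCases_left, if_pos hja]
      · have hstep : combP a p₁ b p₂ (Fin.castAdd i₂ j) = Fin.castAdd i₂ (p₁ j) := by
          rw [combP, Fin.addCases_left, if_neg hja]
        obtain ⟨m, hm⟩ := ih (p₁ j) (by rw [← Function.iterate_succ_apply]; exact hj)
        exact ⟨m + 1, by rw [Function.iterate_succ_apply, hstep, hm]⟩
  intro k
  refine Fin.addCases (motive := fun k => ∃ m, (combP a p₁ b p₂)^[m] k = Fin.natAdd i₁ b)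
    ?_ ?_ k
  · intro j
    obtain ⟨M, hM⟩ := h₁ j
    exact hleft M j hM
  · intro j
    obtain ⟨m, hm⟩ := h₂ j
    exact ⟨m, by rw [combP_right_iter, hm]⟩

lemma prod_combC {i₁ i₂ : ℕ} (a : Fin i₁) (b : Fin i₂) (Cr C2 : ℝ≥0∞) :
    ∏ k ∈ Finset.univ.erase (Fin.natAdd i₁ b),
        (Fin.addCases (fun j => if j = a then C2 else Cr) (fun _ => Cr) k : ℝ≥0∞)
      = C2 * Cr ^ (i₁ + i₂ - 2) := by
  set C : Fin (i₁ + i₂) → ℝ≥0∞ :=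
    Fin.addCases (fun j => if j = a then C2 else Cr) (fun _ => Cr) with hC
  have hCeq : ∀ k, C k = if k = Fin.castAdd i₂ a then C2 else Cr := by
    intro k
    refine Fin.addCases (motive := fun k => C k = if k = Fin.castAdd i₂ a then C2 else Cr)
      ?_ ?_ k
    · intro j
      simp only [hC, Fin.addCases_left]
      by_cases hja : j = a
      · rw [if_pos hja, if_pos (by rw [hja])]
      · rw [if_neg hja, if_neg (by
          intro h
          apply hja
          have := congrArg Fin.val h
          simp only [Fin.coe_castAdd] at this
          exact Fin.ext this)]
    · intro j
      simp only [hC, Fin.addCases_right]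
      rw [if_neg (by
        intro h
        have := congrArg Fin.val h
        simp only [Fin.coe_natAdd, Fin.coe_castAdd] at this
        omega)]
  have hmem : Fin.castAdd i₂ a ∈ Finset.univ.erase (Fin.natAdd i₁ b) := by
    refine Finset.mem_erase.mpr ⟨?_, Finset.mem_univ _⟩
    intro h
    have := congrArg Fin.val h
    simp only [Fin.coe_natAdd, Fin.coe_castAdd] at this
    omega
  rw [← Finset.mul_prod_erase _ C hmem, hCeq, if_pos rfl]
  congr 1
  have hconst : ∀ k ∈ (Finset.univ.erase (Fin.natAdd i₁ b)).erase (Fin.castAdd i₂ a),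
      C k = Cr := by
    intro k hk
    rw [hCeq, if_neg (Finset.mem_erase.mp hk).1]
  rw [Finset.prod_congr rfl hconst, Finset.prod_const]
  congr 1
  rw [Finset.card_erase_of_mem hmem, Finset.card_erase_of_mem (Finset.mem_univ _),
    Finset.card_univ, Fintype.card_fin]
  omega


/-- The probability that the geometric graphs on `{X₁,…,X_{i₁}}` and on `{Y₁,…,Y_{i₂}}` with
radius `r` are each connected and the unions `⋃ⱼ B(Xⱼ;r)` and `⋃ⱼ B(Yⱼ;r)` intersect is at
most `2^d · i₁^{i₁−1} · i₂^{i₂−1} · (r^d‖f‖_∞θ_d)^{i₁+i₂−1}`. -/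
theorem prob_two_components_le (d i₁ i₂ : ℕ) (hd : 1 ≤ d) (hi₁ : 1 ≤ i₁) (hi₂ : 1 ≤ i₂)
    {Ω : Type} [MeasurableSpace Ω] (P : Measure Ω) [IsProbabilityMeasure P]
    (f : EuclideanSpace ℝ (Fin d) → ℝ) (hf : ∀ x, 0 ≤ f x)
    (Mf : ℝ) (hMf : ∀ᵐ x ∂(volume : Measure (EuclideanSpace ℝ (Fin d))), f x ≤ Mf)
    (Z : Fin (i₁ + i₂) → Ω → EuclideanSpace ℝ (Fin d))
    (hmeas : ∀ j, Measurable (Z j))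
    -- all `i₁ + i₂` points are i.i.d. with common density `f`
    (hindep : iIndepFun Z P)
    (hlaw : ∀ j, P.map (Z j) = volume.withDensity (fun x => ENNReal.ofReal (f x)))
    (r : ℝ) (hr : 0 < r) :
    P {ω | (geomGraph r (fun j : Fin i₁ => Z (Fin.castAdd i₂ j) ω)).Connected ∧
           (geomGraph r (fun j : Fin i₂ => Z (Fin.natAdd i₁ j) ω)).Connected ∧
           ((⋃ j : Fin i₁, Metric.ball (Z (Fin.castAdd i₂ j) ω) r) ∩
             (⋃ j : Fin i₂, Metric.ball (Z (Fin.natAdd i₁ j) ω) r)).Nonempty}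
      ≤ ENNReal.ofReal ((2 : ℝ) ^ d * (i₁ : ℝ) ^ (i₁ - 1) * (i₂ : ℝ) ^ (i₂ - 1) *
          (r ^ d * Mf * (volume (Metric.ball (0 : EuclideanSpace ℝ (Fin d)) 1)).toReal)
            ^ (i₁ + i₂ - 1)) := by
  classical
  set θ := (volume (Metric.ball (0 : EuclideanSpace ℝ (Fin d)) 1)).toReal with hθ
  set μ := (volume : Measure (EuclideanSpace ℝ (Fin d))).withDensity
    (fun x => ENNReal.ofReal (f x)) with hμ
  haveI hμprob : IsProbabilityMeasure μ := by
    rw [← hlaw ⟨0, by omega⟩]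
    exact Measure.isProbabilityMeasure_map (hmeas _).aemeasurable
  set X : ℝ := r ^ d * Mf * θ with hX
  set Cr : ℝ≥0∞ := ENNReal.ofReal X with hCrdef
  set C2 : ℝ≥0∞ := ENNReal.ofReal ((2*r) ^ d * Mf * θ) with hC2def
  have hballr : ∀ c, μ (ball c r) ≤ Cr :=
    fun c => ball_density_bound hd f hf Mf hMf hr.le c
  have hball2r : ∀ c, μ (ball c (2*r)) ≤ C2 :=
    fun c => ball_density_bound hd f hf Mf hMf (by linarith) c
  set g : Ω → (Fin (i₁ + i₂) → EuclideanSpace ℝ (Fin d)) := fun ω j => Z j ω with hg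
  have hgmeas : Measurable g := measurable_pi_lambda _ (fun j => hmeas j)
  -- the union of tree events
  set A : {x : (Fin i₁) × (Fin i₁ → Fin i₁) // IsRT x} →
      {x : (Fin i₂) × (Fin i₂ → Fin i₂) // IsRT x} →
      Set (Fin (i₁ + i₂) → EuclideanSpace ℝ (Fin d)) := fun T₁ T₂ =>
    {x | ∀ k, k ≠ Fin.natAdd i₁ T₂.1.1 →
      dist (x (combP T₁.1.1 T₁.1.2 T₂.1.1 T₂.1.2 k)) (x k) <
        Fin.addCases (fun j => if j = T₁.1.1 then 2*r else r) (fun _ => r) k} with hA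
  set U := ⋃ T₁, ⋃ T₂, A T₁ T₂ with hU
  have hAmeas : ∀ T₁ T₂, MeasurableSet (A T₁ T₂) := fun T₁ T₂ =>
    tree_event_measurable _ _ _
  have hUmeas : MeasurableSet U :=
    MeasurableSet.iUnion (fun T₁ => MeasurableSet.iUnion (fun T₂ => hAmeas T₁ T₂))
  -- event inclusion
  have hsub : {ω | (geomGraph r (fun j : Fin i₁ => Z (Fin.castAdd i₂ j) ω)).Connected ∧
           (geomGraph r (fun j : Fin i₂ => Z (Fin.natAdd i₁ j) ω)).Connected ∧
           ((⋃ j : Fin i₁, Metric.ball (Z (Fin.castAdd i₂ j) ω) r) ∩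
             (⋃ j : Fin i₂, Metric.ball (Z (Fin.natAdd i₁ j) ω) r)).Nonempty}
      ⊆ g ⁻¹' U := by
    intro ω hω
    obtain ⟨hc₁, hc₂, w, hw⟩ := hω
    rw [Set.mem_inter_iff] at hw
    obtain ⟨hw1, hw2⟩ := hw
    rw [Set.mem_iUnion] at hw1 hw2
    obtain ⟨a₀, ha₀⟩ := hw1
    obtain ⟨b₀, hb₀⟩ := hw2
    obtain ⟨p₁, hp₁fix, hp₁adj, hp₁reach⟩ := exists_parent_map hc₁ a₀
    obtain ⟨p₂, hp₂fix, hp₂adj, hp₂reach⟩ := exists_parent_map hc₂ b₀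
    have hcross : dist (Z (Fin.natAdd i₁ b₀) ω) (Z (Fin.castAdd i₂ a₀) ω) < 2*r := by
      have h1 : dist w (Z (Fin.castAdd i₂ a₀) ω) < r := mem_ball.mp ha₀
      have h2 : dist w (Z (Fin.natAdd i₁ b₀) ω) < r := mem_ball.mp hb₀
      have h3 := dist_triangle (Z (Fin.natAdd i₁ b₀) ω) w (Z (Fin.castAdd i₂ a₀) ω)
      rw [dist_comm] at h2
      linarith
    rw [Set.mem_preimage, hU, Set.mem_iUnion]
    refine ⟨⟨(a₀, p₁), hp₁fix, hp₁reach⟩, ?_⟩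
    rw [Set.mem_iUnion]
    refine ⟨⟨(b₀, p₂), hp₂fix, hp₂reach⟩, ?_⟩
    rw [hA]
    intro k
    refine Fin.addCases (motive := fun k => k ≠ Fin.natAdd i₁ b₀ →
      dist (g ω (combP a₀ p₁ b₀ p₂ k)) (g ω k) <
        Fin.addCases (fun j => if j = a₀ then 2*r else r) (fun _ => r) k) ?_ ?_ k
    · intro j _
      simp only [combP, Fin.addCases_left]
      by_cases hja : j = a₀
      · rw [if_pos hja, if_pos hja, hja]
        exact hcross
      · rw [if_neg hja, if_neg hja]
        have hadj := hp₁adj j hja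
        rw [geomGraph, SimpleGraph.fromRel_adj] at hadj
        rcases hadj.2 with h | h
        · exact h
        · rw [dist_comm]; exact h
    · intro j hj
      have hjb : j ≠ b₀ := fun h => hj (by rw [h])
      simp only [combP, Fin.addCases_right]
      have hadj := hp₂adj j hjb
      rw [geomGraph, SimpleGraph.fromRel_adj] at hadj
      rcases hadj.2 with h | h
      · exact h
      · rw [dist_comm]; exact h
  -- per-tree bound
  have hkey : ∀ T₁ T₂, Measure.pi (fun _ : Fin (i₁ + i₂) => μ) (A T₁ T₂)
      ≤ C2 * Cr ^ (i₁ + i₂ - 2) := by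
    intro T₁ T₂
    have hb := tree_pi_bound μ (i₁ + i₂) (Fin (i₁ + i₂)) inferInstance inferInstance
      (Fin.natAdd i₁ T₂.1.1) (combP T₁.1.1 T₁.1.2 T₂.1.1 T₂.1.2)
      (Fintype.card_fin _)
      (combP_root T₁.1.1 T₁.1.2 T₂.1.1 T₂.1.2 T₂.2.1)
      (combP_reach T₁.1.1 T₁.1.2 T₂.1.1 T₂.1.2 T₂.2.1 T₁.2.2 T₂.2.2)
      (Fin.addCases (fun j => if j = T₁.1.1 then 2*r else r) (fun _ => r))
      (Fin.addCases (fun j => if j = T₁.1.1 then C2 else Cr) (fun _ => Cr))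
      ?_
    · rw [prod_combC] at hb
      exact hb
    · intro k c
      refine Fin.addCases (motive := fun k =>
        μ (ball c (Fin.addCases (fun j => if j = T₁.1.1 then 2*r else r) (fun _ => r) k))
          ≤ Fin.addCases (fun j => if j = T₁.1.1 then C2 else Cr) (fun _ => Cr) k) ?_ ?_ k
      · intro j
        simp only [Fin.addCases_left]
        by_cases hja : j = T₁.1.1
        · rw [if_pos hja, if_pos hja]; exact hball2r c
        · rw [if_neg hja, if_neg hja]; exact hballr c
      · intro j
        simp only [Fin.addCases_right]
        exact hballr c
  -- counting
  have hcount : Measure.pi (fun _ : Fin (i₁ + i₂) => μ) U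
      ≤ (i₁ ^ (i₁ - 1) : ℕ) * ((i₂ ^ (i₂ - 1) : ℕ) * (C2 * Cr ^ (i₁ + i₂ - 2))) := by
    calc Measure.pi (fun _ : Fin (i₁ + i₂) => μ) U
        ≤ ∑' T₁, Measure.pi (fun _ : Fin (i₁ + i₂) => μ) (⋃ T₂, A T₁ T₂) := by
          rw [hU]; exact measure_iUnion_le _
      _ ≤ ∑' T₁, ∑' T₂, Measure.pi (fun _ : Fin (i₁ + i₂) => μ) (A T₁ T₂) :=
          ENNReal.tsum_le_tsum (fun T₁ => measure_iUnion_le _)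
      _ ≤ ∑' (_T₁ : {x : (Fin i₁) × (Fin i₁ → Fin i₁) // IsRT x}),
            ∑' (_T₂ : {x : (Fin i₂) × (Fin i₂ → Fin i₂) // IsRT x}),
            (C2 * Cr ^ (i₁ + i₂ - 2)) :=
          ENNReal.tsum_le_tsum (fun T₁ => ENNReal.tsum_le_tsum (fun T₂ => hkey T₁ T₂))
      _ = (Fintype.card {x : (Fin i₁) × (Fin i₁ → Fin i₁) // IsRT x} : ℝ≥0∞) *
            ((Fintype.card {x : (Fin i₂) × (Fin i₂ → Fin i₂) // IsRT x} : ℝ≥0∞) *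
              (C2 * Cr ^ (i₁ + i₂ - 2))) := by
          simp only [tsum_fintype, Finset.sum_const, Finset.card_univ, nsmul_eq_mul]
      _ ≤ (i₁ ^ (i₁ - 1) : ℕ) * ((i₂ ^ (i₂ - 1) : ℕ) * (C2 * Cr ^ (i₁ + i₂ - 2))) := by
          refine mul_le_mul' ?_ (mul_le_mul' ?_ le_rfl)
          · exact_mod_cast Nat.cast_le.mpr (card_RT_le i₁ (by omega))
          · exact_mod_cast Nat.cast_le.mpr (card_RT_le i₂ (by omega))
  -- put it together
  have hmap : P.map g = Measure.pi (fun _ : Fin (i₁ + i₂) => μ) :=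
    map_eq_pi P μ Z hmeas hindep (fun j => hlaw j)
  have hchain : P {ω | (geomGraph r (fun j : Fin i₁ => Z (Fin.castAdd i₂ j) ω)).Connected ∧
           (geomGraph r (fun j : Fin i₂ => Z (Fin.natAdd i₁ j) ω)).Connected ∧
           ((⋃ j : Fin i₁, Metric.ball (Z (Fin.castAdd i₂ j) ω) r) ∩
             (⋃ j : Fin i₂, Metric.ball (Z (Fin.natAdd i₁ j) ω) r)).Nonempty}
      ≤ (i₁ ^ (i₁ - 1) : ℕ) * ((i₂ ^ (i₂ - 1) : ℕ) * (C2 * Cr ^ (i₁ + i₂ - 2))) := by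
    refine le_trans (measure_mono hsub) ?_
    rw [← Measure.map_apply hgmeas hUmeas, hmap]
    exact hcount
  refine hchain.trans ?_
  -- final arithmetic
  have hMf0 : 0 ≤ Mf := by
    haveI : Nonempty (Fin d) := ⟨⟨0, hd⟩⟩
    have hne : (volume : Measure (EuclideanSpace ℝ (Fin d))) ≠ 0 := by
      intro h0
      have hpos := measure_ball_pos volume (0 : EuclideanSpace ℝ (Fin d)) one_pos
      rw [h0] at hpos; simp at hpos
    haveI := ae_neBot.mpr hne
    obtain ⟨x, hx⟩ := hMf.exists
    linarith [hf x]
  have hθ0 : 0 ≤ θ := ENNReal.toReal_nonneg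
  have hX0 : 0 ≤ X := by rw [hX]; positivity
  have hC2X : C2 = ENNReal.ofReal (2 ^ d * X) := by
    rw [hC2def, hX]
    congr 1
    rw [mul_pow]
    ring
  have hn2 : i₁ + i₂ - 1 = (i₁ + i₂ - 2) + 1 := by omega
  calc ((i₁ ^ (i₁ - 1) : ℕ) : ℝ≥0∞) * ((i₂ ^ (i₂ - 1) : ℕ) * (C2 * Cr ^ (i₁ + i₂ - 2)))
      = ENNReal.ofReal ((i₁ : ℝ) ^ (i₁ - 1)) *
        (ENNReal.ofReal ((i₂ : ℝ) ^ (i₂ - 1)) *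
          (ENNReal.ofReal (2 ^ d * X) * ENNReal.ofReal (X ^ (i₁ + i₂ - 2)))) := by
        rw [hC2X, ← ENNReal.ofReal_pow hX0]
        congr 1
        · rw [← ENNReal.ofReal_natCast]; congr 1; push_cast; ring
        · congr 1
          rw [← ENNReal.ofReal_natCast]; congr 1; push_cast; ring
    _ = ENNReal.ofReal ((i₁ : ℝ) ^ (i₁ - 1) * ((i₂ : ℝ) ^ (i₂ - 1) *
          (2 ^ d * X * X ^ (i₁ + i₂ - 2)))) := by
        rw [← ENNReal.ofReal_mul (by positivity), ← ENNReal.ofReal_mul (by positivity),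
          ← ENNReal.ofReal_mul (by positivity)]
    _ ≤ ENNReal.ofReal ((2:ℝ) ^ d * (i₁ : ℝ) ^ (i₁ - 1) * (i₂ : ℝ) ^ (i₂ - 1) *
          X ^ (i₁ + i₂ - 1)) := by
        refine ENNReal.ofReal_le_ofReal (le_of_eq ?_)
        rw [hn2, pow_succ]
        ring
end
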